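/- The signature of the localizer L_λ(σ_x, σ_y, σ_z) equals 2 when |λ| < 1 and 0 when |λ| > 1. -/

import Mathlib

open scoped Kronecker Matrix

/-- Signature of a Hermitian matrix: number of positive minus number of
negative eigenvalues (junk value `0` for non-Hermitian matrices). -/
noncomputable def sig {ι : Type*} [Fintype ι] [DecidableEq ι]
    (M : Matrix ι ι ℂ) : ℤ :=
  if h : M.IsHermitian then
    ((Finset.univ.filter fun i => 0 < h.eigenvalues i).card : ℤ) -
    ((Finset.univ.filter fun i => h.eigenvalues i < 0).card : ℤ)
  else 0

noncomputable def sx : Matrix (Fin 2) (Fin 2) ℂ := !![0, 1; 1, 0]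
noncomputable def sy : Matrix (Fin 2) (Fin 2) ℂ := !![0, -Complex.I; Complex.I, 0]
noncomputable def sz : Matrix (Fin 2) (Fin 2) ℂ := !![1, 0; 0, -1]
noncomputable def pauli : Fin 3 → Matrix (Fin 2) (Fin 2) ℂ := ![sx, sy, sz]

/-! ### Auxiliary material -/

theorem my_det_fin_four {R : Type*} [CommRing R] (A : Matrix (Fin 4) (Fin 4) R) :
    Matrix.det A = A 0 0 * A 1 1 * A 2 2 * A 3 3 - A 0 0 * A 1 1 * A 2 3 * A 3 2 - A 0 0 * A 1 2 * A 2 1 * A 3 3 + A 0 0 * A 1 2 * A 2 3 * A 3 1 + A 0 0 * A 1 3 * A 2 1 * A 3 2 - A 0 0 * A 1 3 * A 2 2 * A 3 1 - A 0 1 * A 1 0 * A 2 2 * A 3 3 + A 0 1 * A 1 0 * A 2 3 * A 3 2 + A 0 1 * A 1 2 * A 2 0 * A 3 3 - A 0 1 * A 1 2 * A 2 3 * A 3 0 - A 0 1 * A 1 3 * A 2 0 * A 3 2 + A 0 1 * A 1 3 * A 2 2 * A 3 0 + A 0 2 * A 1 0 * A 2 1 * A 3 3 - A 0 2 * A 1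 0 * A 2 3 * A 3 1 - A 0 2 * A 1 1 * A 2 0 * A 3 3 + A 0 2 * A 1 1 * A 2 3 * A 3 0 + A 0 2 * A 1 3 * A 2 0 * A 3 1 - A 0 2 * A 1 3 * A 2 1 * A 3 0 - A 0 3 * A 1 0 * A 2 1 * A 3 2 + A 0 3 * A 1 0 * A 2 2 * A 3 1 + A 0 3 * A 1 1 * A 2 0 * A 3 2 - A 0 3 * A 1 1 * A 2 2 * A 3 0 - A 0 3 * A 1 2 * A 2 0 * A 3 1 + A 0 3 * A 1 2 * A 2 1 * A 3 0 := by
  rw [Matrix.det_succ_row_zero]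
  simp only [Fin.sum_univ_succ, Matrix.det_fin_three, Fin.sum_univ_zero]
  simp [Matrix.submatrix, Fin.succAbove, Fin.lt_def]
  ring

def Lent (a b c : ℂ) : Fin 2 × Fin 2 → Fin 2 × Fin 2 → ℂ
  | (0,0), (0,0) => 1-c
  | (0,0), (0,1) => -a+b*Complex.I
  | (0,1), (0,0) => -a-b*Complex.I
  | (0,1), (0,1) => -1+c
  | (0,1), (1,0) => 2
  | (1,0), (0,1) => 2
  | (1,0), (1,0) => -1-c
  | (1,0), (1,1) => -a+b*Complex.I
  | (1,1), (1,0) => -a-b*Complex.I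
  | (1,1), (1,1) => 1+c
  | _, _ => 0

noncomputable def LM (a b c : ℝ) : Matrix (Fin 2 × Fin 2) (Fin 2 × Fin 2) ℂ :=
  Matrix.of (Lent a b c)

lemma sum_kron_eq (lam : EuclideanSpace ℝ (Fin 3)) :
    (∑ j, ((pauli j - (lam j : ℂ) • 1) ⊗ₖ pauli j)) = LM (lam 0) (lam 1) (lam 2) := by
  ext ⟨i,j⟩ ⟨k,l⟩
  simp only [Matrix.sum_apply, Fin.sum_univ_three, pauli, sx, sy, sz, Matrix.kroneckerMap_apply,
    Matrix.sub_apply, Matrix.smul_apply, Matrix.one_apply, Matrix.of_apply]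
  fin_cases i <;> fin_cases j <;> fin_cases k <;> fin_cases l <;>
    simp [LM, Lent] <;> ring

lemma LM_herm (a b c : ℝ) : (LM a b c).IsHermitian := by
  unfold Matrix.IsHermitian
  ext ⟨i,j⟩ ⟨k,l⟩
  fin_cases i <;> fin_cases j <;> fin_cases k <;> fin_cases l <;>
    simp [LM, Lent, Matrix.conjTranspose_apply, Complex.ext_iff]

lemma LM_trace (a b c : ℝ) : (LM a b c).trace = 0 := by
  simp only [Matrix.trace, Matrix.diag, Fintype.sum_prod_type, Fin.sum_univ_two, LM, Lent,
    Matrix.of_apply]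
  ring

def e4 : Fin 4 ≃ Fin 2 × Fin 2 where
  toFun := ![(0,0),(0,1),(1,0),(1,1)]
  invFun p := ⟨2*p.1.1+p.2.1, by omega⟩
  left_inv := by decide
  right_inv := by decide

lemma LM_sub (a b c : ℝ) : (LM a b c).submatrix e4 e4 =
    !![1-(c:ℂ), -(a:ℂ)+b*Complex.I, 0, 0;
       -(a:ℂ)-b*Complex.I, -1+c, 2, 0;
       0, 2, -1-(c:ℂ), -(a:ℂ)+b*Complex.I;
       0, 0, -(a:ℂ)-b*Complex.I, 1+(c:ℂ)] := by
  ext i j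
  fin_cases i <;> fin_cases j <;> rfl

lemma LM_det (a b c : ℝ) :
    (LM a b c).det = (((a^2+b^2+c^2)-1) * (3+(a^2+b^2+c^2)) : ℝ) := by
  rw [← Matrix.det_submatrix_equiv_self e4 (LM a b c), LM_sub]
  rw [my_det_fin_four]
  push_cast
  simp [Matrix.vecHead, Matrix.vecTail]
  ring_nf
  simp only [Complex.I_sq, show (Complex.I:ℂ)^4 = 1 by
    rw [show (4:ℕ)=2*2 from rfl, pow_mul, Complex.I_sq]; norm_num]
  ring

set_option maxHeartbeats 2000000 in
lemma LM_poly (a b c : ℝ) :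
    (LM a b c * LM a b c - (2:ℂ) • LM a b c + ((1:ℂ) - ((a:ℂ)^2+(b:ℂ)^2+(c:ℂ)^2)) • 1) *
    (LM a b c * LM a b c + (2:ℂ) • LM a b c - ((3:ℂ) + ((a:ℂ)^2+(b:ℂ)^2+(c:ℂ)^2)) • 1) = 0 := by
  ext ⟨i,j⟩ ⟨k,l⟩
  fin_cases i <;> fin_cases j <;> fin_cases k <;> fin_cases l <;>
  · simp only [Matrix.mul_apply, Fintype.sum_prod_type, Fin.sum_univ_two, Matrix.sub_apply,
      Matrix.add_apply, Matrix.smul_apply, Matrix.one_apply, Matrix.zero_apply, LM, Lent,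
      Matrix.of_apply, smul_eq_mul, Prod.mk.injEq, if_true, if_false]
    norm_num
    try ring_nf
    try simp only [Complex.I_sq, show (Complex.I:ℂ)^4 = 1 by
        rw [show (4:ℕ)=2*2 from rfl, pow_mul, Complex.I_sq]; norm_num,
      show (Complex.I:ℂ)^3 = -Complex.I by rw [pow_succ, Complex.I_sq]; ring]
    try ring_nf

lemma eig_sum (a b c : ℝ) : ∑ i, (LM_herm a b c).eigenvalues i = 0 := by
  have h := LM_herm a b c
  have h1 : (LM a b c).trace = ∑ i, ((LM_herm a b c).eigenvalues i : ℂ) := by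
    conv_lhs => rw [h.spectral_theorem, Unitary.conjStarAlgAut_apply]
    rw [Matrix.trace_mul_cycle]
    have hU : (star (h.eigenvectorUnitary : Matrix (Fin 2 × Fin 2) (Fin 2 × Fin 2) ℂ)) *
        (h.eigenvectorUnitary : Matrix (Fin 2 × Fin 2) (Fin 2 × Fin 2) ℂ) = 1 := by
      exact_mod_cast Unitary.coe_star_mul_self h.eigenvectorUnitary
    rw [hU, one_mul, Matrix.trace_diagonal]
    rfl
  rw [LM_trace] at h1
  norm_cast at h1
  exact h1.symm

lemma eig_prod (a b c : ℝ) :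
    ∏ i, (LM_herm a b c).eigenvalues i = ((a^2+b^2+c^2)-1) * (3+(a^2+b^2+c^2)) := by
  have h1 := (LM_herm a b c).det_eq_prod_eigenvalues
  rw [LM_det] at h1
  norm_cast at h1
  exact Complex.ofReal_injective h1.symm

lemma eig_root (a b c : ℝ) (i : Fin 2 × Fin 2) :
    ((LM_herm a b c).eigenvalues i ^ 2 - 2 * (LM_herm a b c).eigenvalues i + 1 - (a^2+b^2+c^2)) *
    ((LM_herm a b c).eigenvalues i ^ 2 + 2 * (LM_herm a b c).eigenvalues i - 3 - (a^2+b^2+c^2)) = 0 := by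
  have h := LM_herm a b c
  set x : ℝ := (LM_herm a b c).eigenvalues i with hx
  set v : (Fin 2 × Fin 2) → ℂ := ⇑(h.eigenvectorBasis i) with hvdef
  set R : ℂ := ((a:ℂ)^2+(b:ℂ)^2+(c:ℂ)^2) with hR
  have hv : LM a b c *ᵥ v = (x : ℂ) • v := by
    rw [hvdef, h.mulVec_eigenvectorBasis]
    ext j
    simp [Complex.real_smul, hx]
  have hvne : v ≠ 0 := by
    have := h.eigenvectorBasis.orthonormal.ne_zero i
    intro hcon
    apply this
    ext j
    exact congrFun hcon j
  have h2 : (LM a b c * LM a b c) *ᵥ v = ((x:ℂ)^2) • v := by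
    rw [← Matrix.mulVec_mulVec, hv, Matrix.mulVec_smul, hv, smul_smul, ← sq]
  have hQ2 : (LM a b c * LM a b c + (2:ℂ) • LM a b c - ((3:ℂ) + R) • 1) *ᵥ v
      = ((x:ℂ)^2 + 2*x - (3+R)) • v := by
    rw [Matrix.sub_mulVec, Matrix.add_mulVec, h2, Matrix.smul_mulVec, hv,
      Matrix.smul_mulVec, Matrix.one_mulVec]
    module
  have hQ1 : ∀ y : ℂ, (LM a b c * LM a b c - (2:ℂ) • LM a b c + ((1:ℂ) - R) • 1) *ᵥ (y • v)
      = (((x:ℂ)^2 - 2*x + (1 - R)) * y) • v := by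
    intro y
    rw [Matrix.mulVec_smul, Matrix.add_mulVec, Matrix.sub_mulVec, h2,
      Matrix.smul_mulVec, hv, Matrix.smul_mulVec, Matrix.one_mulVec]
    module
  have key : ((((x:ℂ)^2 - 2*x + (1 - R)) * ((x:ℂ)^2 + 2*x - (3+R)))) • v = 0 := by
    have h0 := congrArg (fun M => M *ᵥ v) (LM_poly a b c)
    simp only [Matrix.zero_mulVec] at h0
    rw [← Matrix.mulVec_mulVec, hQ2, hQ1] at h0
    exact h0
  rcases smul_eq_zero.mp key with hz | hz
  · have h3 : (((x^2 - 2*x + 1 - (a^2+b^2+c^2)) * (x^2 + 2*x - 3 - (a^2+b^2+c^2)) : ℝ) : ℂ) = 0 := by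
      push_cast
      rw [← hz, hR]
      ring
    exact_mod_cast h3
  · exact absurd hz hvne

open Finset in
lemma filter_neg_eq (E : Fin 2 × Fin 2 → ℝ) (hne : ∀ i, E i ≠ 0) :
    univ.filter (fun i => ¬ 0 < E i) = univ.filter (fun i => E i < 0) := by
  ext i
  simp only [mem_filter, mem_univ, true_and, not_lt]
  exact ⟨fun h => lt_of_le_of_ne h (hne i), le_of_lt⟩

open Finset in
lemma counting (E : Fin 2 × Fin 2 → ℝ) (hne : ∀ i, E i ≠ 0) :
    (univ.filter fun i => 0 < E i).card + (univ.filter fun i => E i < 0).card = 4 := by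
  classical
  rw [← filter_neg_eq E hne, card_filter_add_card_filter_not]
  decide

open Finset in
lemma counting_parity (E : Fin 2 × Fin 2 → ℝ) (hne : ∀ i, E i ≠ 0) :
    ∏ i, E i = (∏ i ∈ univ.filter (fun i => 0 < E i), E i) *
      ((-1)^(univ.filter (fun i => E i < 0)).card *
        ∏ i ∈ univ.filter (fun i => E i < 0), (-E i)) := by
  classical
  have h1 : ∏ i ∈ univ.filter (fun i => E i < 0), E i
      = (-1)^(univ.filter (fun i => E i < 0)).card *
        ∏ i ∈ univ.filter (fun i => E i < 0), (-E i) := by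
    rw [← prod_const, ← prod_mul_distrib]
    exact prod_congr rfl fun i _ => by ring
  rw [← h1, ← prod_filter_mul_prod_filter_not univ (fun i => 0 < E i) E, filter_neg_eq E hne]

open Finset in
lemma case_lt (E : Fin 2 × Fin 2 → ℝ) (R : ℝ) (hR0 : 0 ≤ R) (hR : R < 1)
    (hsum : ∑ i, E i = 0)
    (hprod : ∏ i, E i = (R-1)*(3+R))
    (hroot : ∀ i, (E i^2 - 2*E i + 1 - R)*(E i^2 + 2*E i - 3 - R) = 0) :
    (univ.filter fun i => 0 < E i).card = 3 ∧ (univ.filter fun i => E i < 0).card = 1 := by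
  classical
  have hne : ∀ i, E i ≠ 0 := by
    intro i h0
    have h := hroot i
    rw [h0] at h
    nlinarith
  set s := univ.filter (fun i => 0 < E i) with hs
  set t := univ.filter (fun i => E i < 0) with ht
  have hc : s.card + t.card = 4 := counting E hne
  have hpar : ∏ i, E i = (∏ i ∈ s, E i) * ((-1)^t.card * ∏ i ∈ t, (-E i)) :=
    counting_parity E hne
  have hsp : 0 < ∏ i ∈ s, E i := prod_pos (fun i hi => (mem_filter.mp hi).2)
  have htp : 0 < ∏ i ∈ t, (-E i) :=
    prod_pos (fun i hi => by have := (mem_filter.mp hi).2; linarith)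
  have hdetneg : (∏ i, E i) < 0 := by rw [hprod]; nlinarith
  have hodd : t.card % 2 = 1 := by
    rcases Nat.even_or_odd t.card with hev | hod
    · exfalso
      rw [hpar, hev.neg_one_pow] at hdetneg
      nlinarith
    · exact Nat.odd_iff.mp hod
  have hneg3 : ∀ i ∈ t, E i ≤ -3 := by
    intro i hi
    have hEi : E i < 0 := (mem_filter.mp hi).2
    have h1 : E i^2 - 2*E i + 1 - R > 0 := by nlinarith
    have h2 : E i^2 + 2*E i - 3 - R = 0 := by
      rcases mul_eq_zero.mp (hroot i) with h|h
      · linarith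
      · exact h
    nlinarith
  have hpos2 : ∀ i ∈ s, E i < 2 := by
    intro i hi
    have hEi : 0 < E i := (mem_filter.mp hi).2
    rcases mul_eq_zero.mp (hroot i) with h|h
    · nlinarith
    · nlinarith
  have hsplit : ∑ i, E i = ∑ i ∈ s, E i + ∑ i ∈ t, E i := by
    rw [hs, ht, ← filter_neg_eq E hne,
      sum_filter_add_sum_filter_not univ (fun i => 0 < E i) E]
  have ht3 : t.card ≠ 3 := by
    intro h3
    have hs1 : s.card = 1 := by omega
    have hsne : s.Nonempty := card_pos.mp (by omega)
    have hsum_s : ∑ i ∈ s, E i < ∑ i ∈ s, (2:ℝ) := sum_lt_sum_of_nonempty hsne hpos2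
    have hsum_t : ∑ i ∈ t, E i ≤ ∑ i ∈ t, (-3:ℝ) := sum_le_sum hneg3
    rw [sum_const, hs1] at hsum_s
    rw [sum_const, h3] at hsum_t
    simp at hsum_s hsum_t
    rw [hsplit] at hsum
    linarith
  constructor <;> omega

open Finset in
lemma case_gt (E : Fin 2 × Fin 2 → ℝ) (R : ℝ) (hR : 1 < R)
    (hsum : ∑ i, E i = 0)
    (hprod : ∏ i, E i = (R-1)*(3+R)) :
    (univ.filter fun i => 0 < E i).card = 2 ∧ (univ.filter fun i => E i < 0).card = 2 := by
  classical
  have hdetpos : 0 < (∏ i, E i) := by rw [hprod]; nlinarith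
  have hne : ∀ i, E i ≠ 0 := by
    intro i
    refine prod_ne_zero_iff.mp (ne_of_gt hdetpos) i (mem_univ i)
  set s := univ.filter (fun i => 0 < E i) with hs
  set t := univ.filter (fun i => E i < 0) with ht
  have hc : s.card + t.card = 4 := counting E hne
  have hpar : ∏ i, E i = (∏ i ∈ s, E i) * ((-1)^t.card * ∏ i ∈ t, (-E i)) :=
    counting_parity E hne
  have hsp : 0 < ∏ i ∈ s, E i := prod_pos (fun i hi => (mem_filter.mp hi).2)
  have htp : 0 < ∏ i ∈ t, (-E i) :=
    prod_pos (fun i hi => by have := (mem_filter.mp hi).2; linarith)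
  have heven : t.card % 2 = 0 := by
    rcases Nat.even_or_odd t.card with hev | hod
    · exact Nat.even_iff.mp hev
    · exfalso
      rw [hpar, hod.neg_one_pow] at hdetpos
      nlinarith
  have ht0 : t.card ≠ 0 := by
    intro h0
    have hs4c : s.card = 4 := by omega
    have hs4 : s = univ := eq_univ_of_card s (by rw [hs4c]; decide)
    have : 0 < ∑ i, E i := sum_pos (fun i _ => by
      have : i ∈ s := hs4 ▸ mem_univ i
      exact (mem_filter.mp this).2) univ_nonempty
    linarith
  have ht4 : t.card ≠ 4 := by
    intro h4
    have hteq : t = univ := eq_univ_of_card t (by rw [h4]; decide)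
    have : ∑ i, E i < 0 := sum_neg (fun i _ => by
      have : i ∈ t := hteq ▸ mem_univ i
      exact (mem_filter.mp this).2) univ_nonempty
    linarith
  constructor <;> omega

theorem signature_of_pauli_localizer (lam : EuclideanSpace ℝ (Fin 3)) :
    (‖lam‖ < 1 → sig (∑ j, ((pauli j - (lam j : ℂ) • 1) ⊗ₖ pauli j)) = 2) ∧
    (1 < ‖lam‖ → sig (∑ j, ((pauli j - (lam j : ℂ) • 1) ⊗ₖ pauli j)) = 0) := by
  have hnorm : ‖lam‖^2 = lam 0^2 + lam 1^2 + lam 2^2 := by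
    rw [EuclideanSpace.norm_eq, Real.sq_sqrt (by positivity)]
    simp [Fin.sum_univ_three, Real.norm_eq_abs, sq_abs]
  have hR0 : (0:ℝ) ≤ lam 0^2 + lam 1^2 + lam 2^2 := by positivity
  rw [sum_kron_eq lam]
  constructor
  · intro hlt
    have hR : lam 0^2 + lam 1^2 + lam 2^2 < 1 := by
      rw [← hnorm]
      nlinarith [norm_nonneg lam]
    obtain ⟨h3, h1⟩ := case_lt ((LM_herm (lam 0) (lam 1) (lam 2)).eigenvalues) _ hR0 hR
      (eig_sum _ _ _) (eig_prod _ _ _) (eig_root _ _ _)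
    rw [sig, dif_pos (LM_herm (lam 0) (lam 1) (lam 2)), h3, h1]
    norm_num
  · intro hgt
    have hR : 1 < lam 0^2 + lam 1^2 + lam 2^2 := by
      rw [← hnorm]
      nlinarith [norm_nonneg lam]
    obtain ⟨h2, h2'⟩ := case_gt ((LM_herm (lam 0) (lam 1) (lam 2)).eigenvalues) _ hR
      (eig_sum _ _ _) (eig_prod _ _ _)
    rw [sig, dif_pos (LM_herm (lam 0) (lam 1) (lam 2)), h2, h2']
    norm_num
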